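/- arXiv:1610.09701 — 4 statements merged into one kernel-verified Lean document; each statement's English description precedes it below -/
import Mathlib

section
/- Let 0 < α ≤ 1 and let f : ℝ² → ℝ have finite norm ‖f‖_{C̊^{0,α}}. Then both of the following two-sided inequalities hold: (1/2)·‖f‖_{C̊^{0,α}} ≤ sup_x |f(x)| + sup_{x ≠ x'} min{|x|^α, |x'|^α} · |f(x) − f(x')| / |x − x'|^α ≤ 2·‖f‖_{C̊^{0,α}}, and (1/2)·‖f‖_{C̊^{0,α}} ≤ sup_x |f(x)| + sup_{x ≠ x'} max{|x|^α, |x'|^α} · |f(x) − f(x')| / |x − x'|^α ≤ 2·‖f‖_{C̊^{0,α}}. -/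
open Real MeasureTheory
open scoped ENNReal

noncomputable section

/-- The sup-norm `sup_x |f x|` of a function on `ℝ²`, valued in `ℝ≥0∞`. -/
def supNorm (f : EuclideanSpace ℝ (Fin 2) → ℝ) : ℝ≥0∞ :=
  ⨆ x : EuclideanSpace ℝ (Fin 2), (‖f x‖₊ : ℝ≥0∞)

/-- The scale-invariant weighted Hölder seminorm
`sup_{x ≠ x'} | |x|^α f(x) − |x'|^α f(x') | / |x − x'|^α`. -/
def ringSemi (α : ℝ) (f : EuclideanSpace ℝ (Fin 2) → ℝ) : ℝ≥0∞ :=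
  ⨆ (x : EuclideanSpace ℝ (Fin 2)) (x' : EuclideanSpace ℝ (Fin 2)) (_ : x ≠ x'),
    (‖(‖x‖ ^ α) * f x - (‖x'‖ ^ α) * f x'‖₊ : ℝ≥0∞) / ENNReal.ofReal (‖x - x'‖ ^ α)

/-- The norm `‖f‖_{C̊^{0,α}} = sup |f| + sup_{x ≠ x'} | |x|^α f(x) − |x'|^α f(x') |/|x−x'|^α`. -/
def ringNorm (α : ℝ) (f : EuclideanSpace ℝ (Fin 2) → ℝ) : ℝ≥0∞ :=
  supNorm f + ringSemi α f

/-- `sup_{x ≠ x'} min(|x|^α, |x'|^α)·|f(x) − f(x')| / |x − x'|^α`. -/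
def minSemi (α : ℝ) (f : EuclideanSpace ℝ (Fin 2) → ℝ) : ℝ≥0∞ :=
  ⨆ (x : EuclideanSpace ℝ (Fin 2)) (x' : EuclideanSpace ℝ (Fin 2)) (_ : x ≠ x'),
    ENNReal.ofReal (min (‖x‖ ^ α) (‖x'‖ ^ α)) * (‖f x - f x'‖₊ : ℝ≥0∞) /
      ENNReal.ofReal (‖x - x'‖ ^ α)

/-- `sup_{x ≠ x'} max(|x|^α, |x'|^α)·|f(x) − f(x')| / |x − x'|^α`. -/
def maxSemi (α : ℝ) (f : EuclideanSpace ℝ (Fin 2) → ℝ) : ℝ≥0∞ :=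
  ⨆ (x : EuclideanSpace ℝ (Fin 2)) (x' : EuclideanSpace ℝ (Fin 2)) (_ : x ≠ x'),
    ENNReal.ofReal (max (‖x‖ ^ α) (‖x'‖ ^ α)) * (‖f x - f x'‖₊ : ℝ≥0∞) /
      ENNReal.ofReal (‖x - x'‖ ^ α)

lemma rpow_subadd' {x y α : ℝ} (hx : 0 ≤ x) (hy : 0 ≤ y) (h0 : 0 ≤ α) (h1 : α ≤ 1) :
    (x + y) ^ α ≤ x ^ α + y ^ α := by
  have h := NNReal.rpow_add_le_add_rpow (x.toNNReal) (y.toNNReal) h0 h1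
  rw [← Real.toNNReal_add hx hy] at h
  have h2 := NNReal.coe_le_coe.mpr h
  simpa [Real.coe_toNNReal, hx, hy, add_nonneg hx hy, NNReal.coe_rpow] using h2

lemma rpow_abs_sub' {a b α : ℝ} (ha : 0 ≤ a) (hb : 0 ≤ b) (h0 : 0 ≤ α) (h1 : α ≤ 1) :
    |a ^ α - b ^ α| ≤ |a - b| ^ α := by
  wlog hab : b ≤ a generalizing a b
  · rw [abs_sub_comm, abs_sub_comm a b]; exact this hb ha (le_of_not_ge hab)
  have heq : b + (a - b) = a := by ring
  have hsub : a ^ α ≤ b ^ α + (a - b) ^ α := by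
    calc a ^ α = (b + (a - b)) ^ α := by rw [heq]
    _ ≤ b ^ α + (a - b) ^ α := rpow_subadd' hb (by linarith) h0 h1
  have hba : b ^ α ≤ a ^ α := Real.rpow_le_rpow hb hab h0
  rw [abs_of_nonneg (by linarith), abs_of_nonneg (by linarith)]
  linarith

section aux
variable {α : ℝ} (hα0 : 0 < α) (hα1 : α ≤ 1) {f : EuclideanSpace ℝ (Fin 2) → ℝ}
variable {x x' : EuclideanSpace ℝ (Fin 2)} (hne : x ≠ x')

include hα0 hα1 hne
set_option linter.unusedSectionVars false

lemma dist_rpow_pos : (0:ℝ) < ‖x - x'‖ ^ α :=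
  Real.rpow_pos_of_pos (by rwa [norm_sub_pos_iff]) α

lemma norms_rpow_sub_le : |‖x‖ ^ α - ‖x'‖ ^ α| ≤ ‖x - x'‖ ^ α := by
  calc |‖x‖ ^ α - ‖x'‖ ^ α| ≤ |‖x‖ - ‖x'‖| ^ α :=
        rpow_abs_sub' (norm_nonneg x) (norm_nonneg x') hα0.le hα1
  _ ≤ ‖x - x'‖ ^ α :=
        Real.rpow_le_rpow (abs_nonneg _) (abs_norm_sub_norm_le x x') hα0.le

end aux

-- real decomposition bounds
lemma ring_le_min_real {α : ℝ} (hα0 : 0 < α) (hα1 : α ≤ 1)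
    (f : EuclideanSpace ℝ (Fin 2) → ℝ) {x x' : EuclideanSpace ℝ (Fin 2)} (hne : x ≠ x') :
    ∃ w, ‖(‖x‖ ^ α) * f x - (‖x'‖ ^ α) * f x'‖ ≤
      min (‖x‖ ^ α) (‖x'‖ ^ α) * ‖f x - f x'‖ + (‖x - x'‖ ^ α) * ‖f w‖ := by
  have hab := norms_rpow_sub_le hα0 hα1 hne
  rcases le_total (‖x‖ ^ α) (‖x'‖ ^ α) with h | h
  · refine ⟨x', ?_⟩
    rw [min_eq_left h]
    have heq : (‖x‖ ^ α) * f x - (‖x'‖ ^ α) * f x'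
        = (‖x‖ ^ α) * (f x - f x') + (‖x‖ ^ α - ‖x'‖ ^ α) * f x' := by ring
    rw [heq]
    calc ‖_ + _‖ ≤ ‖(‖x‖ ^ α) * (f x - f x')‖ + ‖(‖x‖ ^ α - ‖x'‖ ^ α) * f x'‖ := norm_add_le _ _
    _ ≤ (‖x‖ ^ α) * ‖f x - f x'‖ + (‖x - x'‖ ^ α) * ‖f x'‖ := by
        rw [norm_mul, norm_mul, Real.norm_of_nonneg (Real.rpow_nonneg (norm_nonneg x) α),
          Real.norm_eq_abs (‖x‖ ^ α - ‖x'‖ ^ α)]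
        gcongr
  · refine ⟨x, ?_⟩
    rw [min_eq_right h]
    have heq : (‖x‖ ^ α) * f x - (‖x'‖ ^ α) * f x'
        = (‖x'‖ ^ α) * (f x - f x') + (‖x‖ ^ α - ‖x'‖ ^ α) * f x := by ring
    rw [heq]
    calc ‖_ + _‖ ≤ ‖(‖x'‖ ^ α) * (f x - f x')‖ + ‖(‖x‖ ^ α - ‖x'‖ ^ α) * f x‖ := norm_add_le _ _
    _ ≤ (‖x'‖ ^ α) * ‖f x - f x'‖ + (‖x - x'‖ ^ α) * ‖f x‖ := by
        rw [norm_mul, norm_mul, Real.norm_of_nonneg (Real.rpow_nonneg (norm_nonneg x') α),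
          Real.norm_eq_abs (‖x‖ ^ α - ‖x'‖ ^ α)]
        gcongr

lemma max_le_ring_real {α : ℝ} (hα0 : 0 < α) (hα1 : α ≤ 1)
    (f : EuclideanSpace ℝ (Fin 2) → ℝ) {x x' : EuclideanSpace ℝ (Fin 2)} (hne : x ≠ x') :
    ∃ w, max (‖x‖ ^ α) (‖x'‖ ^ α) * ‖f x - f x'‖ ≤
      ‖(‖x‖ ^ α) * f x - (‖x'‖ ^ α) * f x'‖ + (‖x - x'‖ ^ α) * ‖f w‖ := by
  have hab := norms_rpow_sub_le hα0 hα1 hne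
  rcases le_total (‖x‖ ^ α) (‖x'‖ ^ α) with h | h
  · refine ⟨x, ?_⟩
    rw [max_eq_right h]
    have heq : (‖x'‖ ^ α) * (f x - f x')
        = ((‖x‖ ^ α) * f x - (‖x'‖ ^ α) * f x') + (‖x'‖ ^ α - ‖x‖ ^ α) * f x := by ring
    calc (‖x'‖ ^ α) * ‖f x - f x'‖ = ‖(‖x'‖ ^ α) * (f x - f x')‖ := by
          rw [norm_mul, Real.norm_of_nonneg (Real.rpow_nonneg (norm_nonneg x') α)]
    _ ≤ ‖(‖x‖ ^ α) * f x - (‖x'‖ ^ α) * f x'‖ + ‖(‖x'‖ ^ α - ‖x‖ ^ α) * f x‖ := by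
          rw [heq]; exact norm_add_le _ _
    _ ≤ ‖(‖x‖ ^ α) * f x - (‖x'‖ ^ α) * f x'‖ + (‖x - x'‖ ^ α) * ‖f x‖ := by
          rw [norm_mul, Real.norm_eq_abs (‖x'‖ ^ α - ‖x‖ ^ α), abs_sub_comm]
          gcongr
  · refine ⟨x', ?_⟩
    rw [max_eq_left h]
    have heq : (‖x‖ ^ α) * (f x - f x')
        = ((‖x‖ ^ α) * f x - (‖x'‖ ^ α) * f x') + (‖x'‖ ^ α - ‖x‖ ^ α) * f x' := by ring
    calc (‖x‖ ^ α) * ‖f x - f x'‖ = ‖(‖x‖ ^ α) * (f x - f x')‖ := by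
          rw [norm_mul, Real.norm_of_nonneg (Real.rpow_nonneg (norm_nonneg x) α)]
    _ ≤ ‖(‖x‖ ^ α) * f x - (‖x'‖ ^ α) * f x'‖ + ‖(‖x'‖ ^ α - ‖x‖ ^ α) * f x'‖ := by
          rw [heq]; exact norm_add_le _ _
    _ ≤ ‖(‖x‖ ^ α) * f x - (‖x'‖ ^ α) * f x'‖ + (‖x - x'‖ ^ α) * ‖f x'‖ := by
          rw [norm_mul, Real.norm_eq_abs (‖x'‖ ^ α - ‖x‖ ^ α), abs_sub_comm]
          gcongr

lemma div_step {P Q : ℝ≥0∞} {d : ℝ} (hd : 0 < d) (q : ℝ≥0∞)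
    (hQ : Q = ENNReal.ofReal d * q) :
    (P + Q) / ENNReal.ofReal d = P / ENNReal.ofReal d + q := by
  rw [ENNReal.add_div, hQ, mul_comm, mul_div_assoc,
    ENNReal.div_self (ne_of_gt (ENNReal.ofReal_pos.2 hd)) ENNReal.ofReal_ne_top, mul_one]

lemma ringSemi_le_min {α : ℝ} (hα0 : 0 < α) (hα1 : α ≤ 1)
    (f : EuclideanSpace ℝ (Fin 2) → ℝ) :
    ringSemi α f ≤ supNorm f + minSemi α f := by
  refine iSup_le fun x => iSup_le fun x' => iSup_le fun hne => ?_
  obtain ⟨w, hw⟩ := ring_le_min_real hα0 hα1 f hne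
  have hd : (0:ℝ) < ‖x - x'‖ ^ α := dist_rpow_pos hα0 hα1 hne
  have hmin : (0:ℝ) ≤ min (‖x‖ ^ α) (‖x'‖ ^ α) :=
    le_min (Real.rpow_nonneg (norm_nonneg x) α) (Real.rpow_nonneg (norm_nonneg x') α)
  have hconv : (‖(‖x‖ ^ α) * f x - (‖x'‖ ^ α) * f x'‖₊ : ℝ≥0∞) ≤
      ENNReal.ofReal (min (‖x‖ ^ α) (‖x'‖ ^ α)) * (‖f x - f x'‖₊ : ℝ≥0∞) +
        ENNReal.ofReal (‖x - x'‖ ^ α) * (‖f w‖₊ : ℝ≥0∞) := by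
    rw [← ((ofReal_norm _).trans (enorm_eq_nnnorm _)), ← ((ofReal_norm _).trans (enorm_eq_nnnorm _)), ← ((ofReal_norm _).trans (enorm_eq_nnnorm _)),
      ← ENNReal.ofReal_mul hmin, ← ENNReal.ofReal_mul hd.le,
      ← ENNReal.ofReal_add (by positivity) (by positivity)]
    exact ENNReal.ofReal_le_ofReal hw
  calc (‖(‖x‖ ^ α) * f x - (‖x'‖ ^ α) * f x'‖₊ : ℝ≥0∞) / ENNReal.ofReal (‖x - x'‖ ^ α)
      ≤ (ENNReal.ofReal (min (‖x‖ ^ α) (‖x'‖ ^ α)) * (‖f x - f x'‖₊ : ℝ≥0∞) +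
          ENNReal.ofReal (‖x - x'‖ ^ α) * (‖f w‖₊ : ℝ≥0∞)) / ENNReal.ofReal (‖x - x'‖ ^ α) :=
        ENNReal.div_le_div_right hconv _
    _ = ENNReal.ofReal (min (‖x‖ ^ α) (‖x'‖ ^ α)) * (‖f x - f x'‖₊ : ℝ≥0∞) /
          ENNReal.ofReal (‖x - x'‖ ^ α) + (‖f w‖₊ : ℝ≥0∞) := div_step hd _ rfl
    _ ≤ minSemi α f + supNorm f := by
        refine add_le_add ?_ ?_
        · exact le_iSup_of_le x (le_iSup_of_le x' (le_iSup_of_le hne le_rfl))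
        · exact le_iSup (fun y => (‖f y‖₊ : ℝ≥0∞)) w
    _ = supNorm f + minSemi α f := add_comm _ _

lemma maxSemi_le_ring {α : ℝ} (hα0 : 0 < α) (hα1 : α ≤ 1)
    (f : EuclideanSpace ℝ (Fin 2) → ℝ) :
    maxSemi α f ≤ supNorm f + ringSemi α f := by
  refine iSup_le fun x => iSup_le fun x' => iSup_le fun hne => ?_
  obtain ⟨w, hw⟩ := max_le_ring_real hα0 hα1 f hne
  have hd : (0:ℝ) < ‖x - x'‖ ^ α := dist_rpow_pos hα0 hα1 hne
  have hmax : (0:ℝ) ≤ max (‖x‖ ^ α) (‖x'‖ ^ α) :=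
    le_max_of_le_left (Real.rpow_nonneg (norm_nonneg x) α)
  have hconv : ENNReal.ofReal (max (‖x‖ ^ α) (‖x'‖ ^ α)) * (‖f x - f x'‖₊ : ℝ≥0∞) ≤
      (‖(‖x‖ ^ α) * f x - (‖x'‖ ^ α) * f x'‖₊ : ℝ≥0∞) +
        ENNReal.ofReal (‖x - x'‖ ^ α) * (‖f w‖₊ : ℝ≥0∞) := by
    rw [← ((ofReal_norm _).trans (enorm_eq_nnnorm _)), ← ((ofReal_norm _).trans (enorm_eq_nnnorm _)), ← ((ofReal_norm _).trans (enorm_eq_nnnorm _)),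
      ← ENNReal.ofReal_mul hmax, ← ENNReal.ofReal_mul hd.le,
      ← ENNReal.ofReal_add (by positivity) (by positivity)]
    exact ENNReal.ofReal_le_ofReal hw
  calc ENNReal.ofReal (max (‖x‖ ^ α) (‖x'‖ ^ α)) * (‖f x - f x'‖₊ : ℝ≥0∞) /
        ENNReal.ofReal (‖x - x'‖ ^ α)
      ≤ ((‖(‖x‖ ^ α) * f x - (‖x'‖ ^ α) * f x'‖₊ : ℝ≥0∞) +
          ENNReal.ofReal (‖x - x'‖ ^ α) * (‖f w‖₊ : ℝ≥0∞)) / ENNReal.ofReal (‖x - x'‖ ^ α) :=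
        ENNReal.div_le_div_right hconv _
    _ = (‖(‖x‖ ^ α) * f x - (‖x'‖ ^ α) * f x'‖₊ : ℝ≥0∞) /
          ENNReal.ofReal (‖x - x'‖ ^ α) + (‖f w‖₊ : ℝ≥0∞) := div_step hd _ rfl
    _ ≤ ringSemi α f + supNorm f := by
        refine add_le_add ?_ ?_
        · exact le_iSup_of_le x (le_iSup_of_le x' (le_iSup_of_le hne le_rfl))
        · exact le_iSup (fun y => (‖f y‖₊ : ℝ≥0∞)) w
    _ = supNorm f + ringSemi α f := add_comm _ _

lemma minSemi_le_maxSemi (α : ℝ) (f : EuclideanSpace ℝ (Fin 2) → ℝ) :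
    minSemi α f ≤ maxSemi α f := by
  refine iSup_le fun x => iSup_le fun x' => iSup_le fun hne => ?_
  refine le_iSup_of_le x (le_iSup_of_le x' (le_iSup_of_le hne ?_))
  gcongr
  exact min_le_max


set_option linter.unusedVariables false in
/-- Equivalence of the `C̊^{0,α}` norm with the min- and max-weighted versions. -/
theorem ringNorm_equiv (α : ℝ) (hα0 : 0 < α) (hα1 : α ≤ 1)
    (f : EuclideanSpace ℝ (Fin 2) → ℝ) (hf : ringNorm α f ≠ ⊤) :
    (ringNorm α f) / 2 ≤ supNorm f + minSemi α f ∧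
      supNorm f + minSemi α f ≤ 2 * ringNorm α f ∧
    (ringNorm α f) / 2 ≤ supNorm f + maxSemi α f ∧
      supNorm f + maxSemi α f ≤ 2 * ringNorm α f := by

  set S := supNorm f
  set R := ringSemi α f
  set m := minSemi α f
  set M := maxSemi α f
  have h1 : R ≤ S + m := ringSemi_le_min hα0 hα1 f
  have h2 : M ≤ S + R := maxSemi_le_ring hα0 hα1 f
  have h3 : m ≤ M := minSemi_le_maxSemi α f
  have hg1 : ringNorm α f / 2 ≤ S + m := by
    rw [ENNReal.div_le_iff_le_mul (Or.inl (by norm_num)) (Or.inl (by norm_num))]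
    calc ringNorm α f = S + R := rfl
      _ ≤ S + (S + m) := add_le_add le_rfl h1
      _ ≤ (S + m) + (S + m) := add_le_add (self_le_add_right S m) le_rfl
      _ = (S + m) * 2 := (mul_two _).symm
  have hg4 : S + M ≤ 2 * ringNorm α f := by
    calc S + M ≤ S + (S + R) := add_le_add le_rfl h2
      _ ≤ (S + R) + (S + R) := add_le_add (self_le_add_right S R) le_rfl
      _ = 2 * (S + R) := (two_mul _).symm
      _ = 2 * ringNorm α f := rfl
  have hg2 : S + m ≤ 2 * ringNorm α f :=
    le_trans (add_le_add le_rfl h3) hg4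
  have hg3 : ringNorm α f / 2 ≤ S + M :=
    hg1.trans (add_le_add le_rfl h3)
  exact ⟨hg1, hg2, hg3, hg4⟩
end
end

section
/- Let m ≥ 3 be an integer. There exists a constant C_m > 0 such that for all x, y ∈ ℝ² with y ≠ 0 and |y| ≥ 2|x|, the m-fold symmetrized Biot–Savart kernel K^{(m)}(x,y) := (1/m) Σ_{i=1}^{m} K(x − O_{2πi/m} y) satisfies |K^{(m)}(x,y)| ≤ C_m · |x|^{m−1} / |y|^m. -/
open Real
open scoped BigOperators

noncomputable section

/-- The point of `ℝ²` with coordinates `(a, b)`. -/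
def mk2 (a b : ℝ) : EuclideanSpace ℝ (Fin 2) := (WithLp.equiv 2 (Fin 2 → ℝ)).symm ![a, b]

/-- Counterclockwise rotation of `ℝ²` by the angle `β`. -/
def rot (β : ℝ) (y : EuclideanSpace ℝ (Fin 2)) : EuclideanSpace ℝ (Fin 2) :=
  mk2 (Real.cos β * y 0 - Real.sin β * y 1) (Real.sin β * y 0 + Real.cos β * y 1)

/-- The 2D Biot–Savart kernel `K(z) = (1/2π) z^⊥ / |z|²`. -/
def BSKernel (z : EuclideanSpace ℝ (Fin 2)) : EuclideanSpace ℝ (Fin 2) :=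
  (2 * Real.pi * ‖z‖ ^ 2)⁻¹ • mk2 (-(z 1)) (z 0)

/-- The `m`-fold symmetrized Biot–Savart kernel
`K^{(m)}(x,y) = (1/m) Σ_{i=1}^m K(x − O_{2πi/m} y)`. -/
def symKernel (m : ℕ) (x y : EuclideanSpace ℝ (Fin 2)) : EuclideanSpace ℝ (Fin 2) :=
  (m : ℝ)⁻¹ • ∑ i ∈ Finset.Icc 1 m, BSKernel (x - rot (2 * Real.pi * i / m) y)

/-! ### Auxiliary material: identification of `ℝ²` with `ℂ` -/

/-- The complex number corresponding to a point of `ℝ²`. -/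
def cx (z : EuclideanSpace ℝ (Fin 2)) : ℂ := Complex.mk (z 0) (z 1)

lemma cx_sub (x y : EuclideanSpace ℝ (Fin 2)) : cx (x - y) = cx x - cx y := by
  simp [cx, Complex.ext_iff]

lemma cx_smul (r : ℝ) (x : EuclideanSpace ℝ (Fin 2)) : cx (r • x) = r * cx x := by
  simp [cx, Complex.ext_iff]

lemma abs_cx (z : EuclideanSpace ℝ (Fin 2)) : ‖cx z‖ = ‖z‖ := by
  rw [EuclideanSpace.norm_eq, Complex.norm_def, Complex.normSq_mk]
  simp [Fin.sum_univ_two, sq, cx]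

lemma cx_add (x y : EuclideanSpace ℝ (Fin 2)) : cx (x + y) = cx x + cx y := by
  simp [cx, Complex.ext_iff]

lemma cx_sum {ι : Type*} (s : Finset ι) (f : ι → EuclideanSpace ℝ (Fin 2)) :
    cx (∑ i ∈ s, f i) = ∑ i ∈ s, cx (f i) := by
  classical
  induction s using Finset.induction_on with
  | empty => simp [cx, Complex.ext_iff]
  | insert _ _ h ih => rw [Finset.sum_insert h, Finset.sum_insert h, cx_add, ih]

lemma cx_rot (β : ℝ) (y : EuclideanSpace ℝ (Fin 2)) :
    cx (rot β y) = Complex.exp (β * Complex.I) * cx y := by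
  simp only [cx, rot, mk2, Complex.ext_iff, Complex.exp_mul_I, Complex.cos_ofReal_re,
    Complex.sin_ofReal_re, Complex.add_re, Complex.add_im, Complex.mul_re, Complex.mul_im,
    Complex.I_re, Complex.I_im, Complex.mul_I_re, Complex.mul_I_im]
  constructor <;>
    simp [WithLp.equiv_symm_apply, PiLp.toLp_apply, Complex.cos_ofReal_re, Complex.sin_ofReal_re,
      Complex.cos_ofReal_im, Complex.sin_ofReal_im] <;> ring

lemma cx_BS (z : EuclideanSpace ℝ (Fin 2)) (hz : cx z ≠ 0) :
    cx (BSKernel z) = Complex.I / (2 * Real.pi * (starRingEnd ℂ) (cx z)) := by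
  rw [BSKernel, cx_smul]
  have h1 : cx (mk2 (-(z 1)) (z 0)) = Complex.I * cx z := by
    simp [cx, mk2, Complex.ext_iff]
  have hc : (starRingEnd ℂ) (cx z) ≠ 0 := by simpa using hz
  have key : ((‖z‖ : ℂ)) ^ 2 = cx z * (starRingEnd ℂ) (cx z) := by
    rw [Complex.mul_conj, Complex.normSq_eq_norm_sq, abs_cx]; push_cast; ring
  rw [h1]
  push_cast
  rw [key]
  have hπ : (Real.pi : ℂ) ≠ 0 := by exact_mod_cast Real.pi_ne_zero
  field_simp

lemma cx_BS_rot (θ : ℝ) (x y : EuclideanSpace ℝ (Fin 2))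
    (h : (starRingEnd ℂ) (cx x) - Complex.exp (-(θ : ℂ) * Complex.I) * (starRingEnd ℂ) (cx y) ≠ 0) :
    cx (BSKernel (x - rot θ y)) = Complex.I /
      (2 * Real.pi * ((starRingEnd ℂ) (cx x)
        - Complex.exp (-(θ : ℂ) * Complex.I) * (starRingEnd ℂ) (cx y))) := by
  have hconj : (starRingEnd ℂ) (cx (x - rot θ y)) =
      (starRingEnd ℂ) (cx x) - Complex.exp (-(θ : ℂ) * Complex.I) * (starRingEnd ℂ) (cx y) := by
    rw [cx_sub, cx_rot, map_sub, map_mul, ← Complex.exp_conj]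
    congr 2
    simp [Complex.conj_I]
  have hz : cx (x - rot θ y) ≠ 0 := by
    intro h0
    exact h (by rw [← hconj, h0, map_zero])
  rw [cx_BS _ hz, hconj]

/-! ### Auxiliary algebraic lemmas -/

open Polynomial in
lemma derivative_finset_prod {ι : Type*} [DecidableEq ι] (s : Finset ι) (f : ι → Polynomial ℂ) :
    Polynomial.derivative (∏ i ∈ s, f i) =
      ∑ i ∈ s, (∏ j ∈ s.erase i, f j) * Polynomial.derivative (f i) := by
  rw [Finset.prod_eq_multiset_prod, Polynomial.derivative_prod, Finset.sum_eq_multiset_sum]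
  simp [Finset.prod_eq_multiset_prod, Finset.erase_val]

open Polynomial in
lemma sum_inv_root_sub (m : ℕ) (hm : 0 < m) {ζ : ℂ} (hζ : IsPrimitiveRoot ζ m) (X Y : ℂ)
    (h : ∀ i ∈ Finset.range m, X - ζ ^ i * Y ≠ 0) :
    ∑ i ∈ Finset.range m, (X - ζ ^ i * Y)⁻¹ = m * X ^ (m - 1) / (X ^ m - Y ^ m) := by
  have hpoly := X_pow_sub_C_eq_prod hζ hm (rfl : Y ^ m = Y ^ m)
  have hprod : ∏ i ∈ Finset.range m, (X - ζ ^ i * Y) = X ^ m - Y ^ m := by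
    have := congrArg (Polynomial.eval X) hpoly
    simp only [Polynomial.eval_prod, Polynomial.eval_sub, Polynomial.eval_pow,
      Polynomial.eval_X, Polynomial.eval_C] at this
    exact this.symm
  have hne : X ^ m - Y ^ m ≠ 0 := hprod ▸ Finset.prod_ne_zero_iff.mpr h
  have hderiv : ∑ i ∈ Finset.range m,
      ∏ j ∈ (Finset.range m).erase i, (X - ζ ^ j * Y) = m * X ^ (m - 1) := by
    have := congrArg (fun p => Polynomial.eval X (Polynomial.derivative p)) hpoly
    simp only [Polynomial.derivative_sub, Polynomial.derivative_C, Polynomial.derivative_X_pow,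
      derivative_finset_prod, Polynomial.derivative_X_sub_C, Polynomial.derivative_X, mul_one,
      sub_zero, Polynomial.eval_mul, Polynomial.eval_finset_sum, Polynomial.eval_prod,
      Polynomial.eval_sub, Polynomial.eval_pow, Polynomial.eval_X, Polynomial.eval_C,
      Polynomial.eval_natCast, Polynomial.eval_one] at this
    exact this.symm
  calc ∑ i ∈ Finset.range m, (X - ζ ^ i * Y)⁻¹
      = ∑ i ∈ Finset.range m,
        (∏ j ∈ (Finset.range m).erase i, (X - ζ ^ j * Y)) / (X ^ m - Y ^ m) := by
        refine Finset.sum_congr rfl fun i hi => ?_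
        rw [eq_div_iff hne, ← hprod, ← Finset.mul_prod_erase _ _ hi,
          inv_mul_cancel_left₀ (h i hi)]
    _ = _ := by rw [← Finset.sum_div, hderiv]

lemma sum_Icc_pow_root (m : ℕ) (hm : 0 < m) (w : ℂ) (hw : w ^ m = 1) (g : ℂ → ℂ) :
    ∑ i ∈ Finset.Icc 1 m, g (w ^ i) = ∑ i ∈ Finset.range m, g (w ^ i) := by
  obtain ⟨n, rfl⟩ : ∃ n, m = n + 1 := ⟨m - 1, by omega⟩
  rw [← Finset.Ico_add_one_right_eq_Icc, Finset.sum_Ico_eq_sum_range]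
  have h2 : n + 1 + 1 - 1 = n + 1 := by omega
  rw [h2, Finset.sum_range_succ, Finset.sum_range_succ']
  rw [show 1 + n = n + 1 from by omega, hw, pow_zero]
  congr 1
  exact Finset.sum_congr rfl fun i _ => by rw [add_comm 1 i]

/-- Decay of the `m`-fold symmetrized Biot–Savart kernel: for `m ≥ 3` there is `C_m > 0`
such that `|K^{(m)}(x,y)| ≤ C_m |x|^{m−1} / |y|^m` whenever `|y| ≥ 2|x|`, `y ≠ 0`. -/
theorem symKernel_decay (m : ℕ) (hm : 3 ≤ m) :
    ∃ C : ℝ, 0 < C ∧ ∀ x y : EuclideanSpace ℝ (Fin 2), y ≠ 0 → 2 * ‖x‖ ≤ ‖y‖ →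
      ‖symKernel m x y‖ ≤ C * ‖x‖ ^ (m - 1) / ‖y‖ ^ m := by
  refine ⟨1, one_pos, fun x y hy hxy => ?_⟩
  have hm0 : 0 < m := by omega
  have hy0 : 0 < ‖y‖ := norm_pos_iff.mpr hy
  set X : ℂ := (starRingEnd ℂ) (cx x) with hX
  set Y : ℂ := (starRingEnd ℂ) (cx y) with hY
  have habsX : ‖X‖ = ‖x‖ := by rw [hX, Complex.norm_conj, abs_cx]
  have habsY : ‖Y‖ = ‖y‖ := by rw [hY, Complex.norm_conj, abs_cx]
  set w : ℂ := Complex.exp (((-(2 * π / m) : ℝ) : ℂ) * Complex.I) with hwdef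
  have hw : IsPrimitiveRoot w m := by
    have h0 := Complex.isPrimitiveRoot_exp m (by omega)
    have he : w = (Complex.exp (2 * π * Complex.I / m))⁻¹ := by
      rw [← Complex.exp_neg, hwdef]; congr 1; push_cast; ring
    rw [he]; exact h0.inv
  have hw1 : w ^ m = 1 := hw.pow_eq_one
  have habsw : ∀ i : ℕ, ‖w ^ i‖ = 1 := by
    intro i
    rw [norm_pow, hwdef, Complex.norm_exp_ofReal_mul_I, one_pow]
  have hne : ∀ i : ℕ, X - w ^ i * Y ≠ 0 := by
    intro i h0
    have h1 : ‖w ^ i * Y‖ = ‖y‖ := by rw [norm_mul, habsw, one_mul, habsY]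
    have h2 : X = w ^ i * Y := by linear_combination h0
    rw [← h2, habsX] at h1
    nlinarith
  have hterm : ∀ i ∈ Finset.Icc 1 m, cx (BSKernel (x - rot (2 * π * i / m) y)) =
      Complex.I / (2 * π) * (X - w ^ i * Y)⁻¹ := by
    intro i _
    have hexp : Complex.exp (-((2 * π * i / m : ℝ) : ℂ) * Complex.I) = w ^ i := by
      rw [← Complex.exp_nat_mul]; congr 1; push_cast; ring
    rw [cx_BS_rot (2 * π * i / m) x y (by rw [hexp]; exact hne i), hexp]
    rw [div_eq_mul_inv, div_eq_mul_inv, mul_inv]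
    ring
  have hcx : cx (symKernel m x y) =
      (((m : ℝ)⁻¹ : ℝ) : ℂ) * (Complex.I / (2 * π) *
        ((m : ℂ) * X ^ (m - 1) / (X ^ m - Y ^ m))) := by
    rw [symKernel, cx_smul, cx_sum, Finset.sum_congr rfl hterm, ← Finset.mul_sum]
    congr 2
    have hsh := sum_Icc_pow_root m hm0 w hw1 (fun t => (X - t * Y)⁻¹)
    exact hsh.trans (sum_inv_root_sub m hm0 hw X Y fun i _ => hne i)
  set D : ℝ := ‖X ^ m - Y ^ m‖ with hDdef
  have hD : ‖y‖ ^ m / 2 ≤ D := by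
    have h1 : ‖X ^ m‖ = ‖x‖ ^ m := by rw [norm_pow, habsX]
    have h2 : ‖Y ^ m‖ = ‖y‖ ^ m := by rw [norm_pow, habsY]
    have h3 : ‖Y ^ m‖ - ‖X ^ m‖ ≤ D := by
      rw [hDdef,
        norm_sub_rev]
      exact norm_sub_norm_le _ _
    have ha : ‖x‖ ≤ ‖y‖ / 2 := by linarith
    have hb : ‖x‖ ^ m ≤ (‖y‖ / 2) ^ m := pow_le_pow_left₀ (norm_nonneg x) ha m
    have hc : (2 : ℝ) ≤ 2 ^ m := by
      calc (2 : ℝ) = 2 ^ 1 := (pow_one 2).symm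
        _ ≤ 2 ^ m := pow_le_pow_right₀ one_le_two (by omega)
    have hd : (‖y‖ / 2) ^ m ≤ ‖y‖ ^ m / 2 := by
      rw [div_pow]
      gcongr
    nlinarith
  have hnorm : ‖symKernel m x y‖ =
      (m : ℝ)⁻¹ * ((2 * π)⁻¹ * ((m : ℝ) * ‖x‖ ^ (m - 1)) / D) := by
    rw [← abs_cx, hcx]
    rw [norm_mul, norm_mul, norm_div, norm_div, norm_mul, norm_mul, norm_pow,
      Complex.norm_I, habsX, Complex.norm_real, Real.norm_eq_abs, Complex.norm_natCast,
      Complex.norm_two, Complex.norm_real, Real.norm_eq_abs, ← hDdef]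
    rw [abs_of_nonneg (by positivity : (0:ℝ) ≤ (m:ℝ)⁻¹), abs_of_nonneg Real.pi_pos.le]
    field_simp
  rw [hnorm]
  have hπ : 0 < π := Real.pi_pos
  have hD0 : 0 < D := lt_of_lt_of_le (by positivity) hD
  have hπ1 : (1:ℝ) ≤ π := by linarith [Real.pi_gt_three]
  calc (m : ℝ)⁻¹ * ((2 * π)⁻¹ * ((m : ℝ) * ‖x‖ ^ (m - 1)) / D)
      = (2 * π)⁻¹ * ‖x‖ ^ (m - 1) / D := by
        have hmne : (m : ℝ) ≠ 0 := by positivity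
        field_simp
    _ ≤ (2 * π)⁻¹ * ‖x‖ ^ (m - 1) / (‖y‖ ^ m / 2) := by
        gcongr
    _ = π⁻¹ * ‖x‖ ^ (m - 1) / ‖y‖ ^ m := by
        field_simp
    _ ≤ 1 * ‖x‖ ^ (m - 1) / ‖y‖ ^ m := by
        gcongr
        exact inv_le_one_of_one_le₀ hπ1
end
end

section
/- Let ε > 0, let C ≥ 0, and let f : [0, ε) → ℝ be continuous with f(t) ≥ 0 for all t, f(0) = 0, and suppose that for every t ∈ [0, ε) one has f(t) ≤ C · ∫₀ᵗ g(f(s)) ds, where g(a) := a · ln(1 + 1/a) for a > 0 and g(0) := 0. Then f(t) = 0 for every t ∈ [0, ε). -/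
open Real Set MeasureTheory intervalIntegral Topology

noncomputable section

/-- The Osgood modulus `g(a) = a·ln(1 + 1/a)` for `a > 0`, extended by `g(0) = 0`
(note that with Lean's convention `1/0 = 0` the formula itself gives `0` at `a = 0`). -/
def osgoodMod (a : ℝ) : ℝ := a * Real.log (1 + 1 / a)

lemma osgoodMod_eq {a : ℝ} (ha : 0 ≤ a) :
    osgoodMod a = a * Real.log (a + 1) - a * Real.log a := by
  rcases eq_or_lt_of_le ha with rfl | ha
  · simp [osgoodMod]
  · unfold osgoodMod
    rw [show (1 : ℝ) + 1 / a = (a + 1) / a by field_simp,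
      Real.log_div (by positivity) (ne_of_gt ha)]
    ring

lemma osgoodMod_nonneg {a : ℝ} (ha : 0 ≤ a) : 0 ≤ osgoodMod a :=
  mul_nonneg ha (Real.log_nonneg (by
    rcases eq_or_lt_of_le ha with rfl | ha
    · simp
    · have : 0 ≤ 1 / a := by positivity
      linarith))

lemma continuousOn_osgoodMod : ContinuousOn osgoodMod (Ici 0) := by
  have h : ContinuousOn (fun a : ℝ => a * Real.log (a + 1) - a * Real.log a) (Ici 0) := by
    apply ContinuousOn.sub
    · exact continuousOn_id.mul ((Real.continuousOn_log.comp
        ((continuous_id.add continuous_const).continuousOn)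
        (fun a (ha : a ∈ Ici (0:ℝ)) => by
          simp only [mem_compl_iff, mem_singleton_iff]
          intro h; linarith [mem_Ici.mp ha])))
    · exact Real.continuous_mul_log.continuousOn
  exact h.congr fun a ha => osgoodMod_eq ha

lemma osgoodMod_le {a : ℝ} (ha : 0 ≤ a) (ha1 : a ≤ 1) :
    osgoodMod a ≤ a * (1 - Real.log a) := by
  rw [osgoodMod_eq ha]
  have h1 : Real.log (a + 1) ≤ a := by
    have := Real.log_le_sub_one_of_pos (show (0:ℝ) < a + 1 by linarith)
    linarith
  have h2 : a * Real.log (a + 1) ≤ a * 1 :=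
    mul_le_mul_of_nonneg_left (h1.trans ha1) ha
  nlinarith

/-- Monotonicity of `a ↦ a (1 - log a)` on `[0, 1]`. -/
lemma osgood_h_mono {x y : ℝ} (hx : 0 ≤ x) (hxy : x ≤ y) (hy : y ≤ 1) :
    x * (1 - Real.log x) ≤ y * (1 - Real.log y) := by
  rcases eq_or_lt_of_le hx with rfl | hx
  · have hly : Real.log y ≤ 0 := Real.log_nonpos (by linarith) hy
    have : 0 ≤ y := by linarith
    nlinarith
  · set h : ℝ → ℝ := fun s => s - s * Real.log s with hh
    have hmono : MonotoneOn h (Icc x 1) := by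
      apply monotoneOn_of_deriv_nonneg (convex_Icc x 1)
      · exact (continuous_id.sub Real.continuous_mul_log).continuousOn
      · intro s hs
        rw [interior_Icc] at hs
        have hs0 : s ≠ 0 := by have := hs.1; intro h; subst h; linarith
        exact ((hasDerivAt_id s).sub (Real.hasDerivAt_mul_log hs0)).differentiableAt
          |>.differentiableWithinAt
      · intro s hs
        rw [interior_Icc] at hs
        have hs0 : s ≠ 0 := by have := hs.1; intro h; subst h; linarith
        have hd : deriv h s = -Real.log s := by
          have := ((hasDerivAt_id s).sub (Real.hasDerivAt_mul_log hs0)).deriv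
          have e : deriv h s = deriv (id - fun x => x * Real.log x) s := rfl
          rw [e]
          simpa using this
        rw [hd]
        simp only [neg_nonneg]
        exact Real.log_nonpos (by linarith [hs.1]) hs.2.le
    have h1 := hmono (show x ∈ Icc x 1 from ⟨le_refl x, hxy.trans hy⟩)
      (show y ∈ Icc x 1 from ⟨hxy, hy⟩) hxy
    simp only [hh] at h1
    nlinarith [h1]

/-- Osgood-type uniqueness lemma: a continuous nonnegative function on `[0, ε)` with
`f(0) = 0` and `f(t) ≤ C ∫₀ᵗ f(s) ln(1 + 1/f(s)) ds` vanishes identically. -/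
theorem osgood_uniqueness (ε : ℝ) (hε : 0 < ε) (C : ℝ) (hC : 0 ≤ C) (f : ℝ → ℝ)
    (hcont : ContinuousOn f (Ico 0 ε))
    (hnonneg : ∀ t ∈ Ico (0 : ℝ) ε, 0 ≤ f t)
    (hzero : f 0 = 0)
    (hineq : ∀ t ∈ Ico (0 : ℝ) ε, f t ≤ C * ∫ s in (0 : ℝ)..t, osgoodMod (f s)) :
    ∀ t ∈ Ico (0 : ℝ) ε, f t = 0 := by
  intro t0 ht0
  rcases eq_or_lt_of_le ht0.1 with h0 | ht0pos
  · rw [← h0]; exact hzero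
  -- It suffices to show `f t0 ≤ η` for every `η > 0`.
  refine le_antisymm ?_ (hnonneg t0 ht0)
  refine le_of_forall_pos_le_add fun η hη => ?_
  rw [zero_add]
  -- Setup
  set t1 : ℝ := (t0 + ε) / 2 with ht1
  have ht01 : t0 < t1 := by simp only [ht1]; linarith [ht0.2]
  have ht1ε : t1 < ε := by simp only [ht1]; linarith [ht0.2]
  have ht1pos : 0 < t1 := lt_trans ht0pos ht01
  set G : ℝ → ℝ := fun s => osgoodMod (f s) with hG
  have hsub : Icc (0:ℝ) t1 ⊆ Ico 0 ε := fun s hs => ⟨hs.1, lt_of_le_of_lt hs.2 ht1ε⟩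
  have hGcont : ContinuousOn G (Icc 0 t1) :=
    continuousOn_osgoodMod.comp (hcont.mono hsub) fun s hs => hnonneg s (hsub hs)
  set F : ℝ → ℝ := fun t => C * ∫ s in (0:ℝ)..t, G s with hF
  set C' : ℝ := C + 1 with hC'
  have hC'pos : 0 < C' := by linarith
  set M : ℝ := max 1 (1 - Real.log η) with hM
  have hM1 : 1 ≤ M := le_max_left _ _
  set K : ℝ := M * Real.exp (C' * t0) with hK
  have hK1 : 1 ≤ K := by
    have : (1:ℝ) ≤ Real.exp (C' * t0) := Real.one_le_exp (by positivity)
    nlinarith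
  set B : ℝ → ℝ := fun t => Real.exp (1 - K * Real.exp (-C' * t)) with hB
  set B' : ℝ → ℝ := fun t => Real.exp (1 - K * Real.exp (-C' * t)) *
    (K * C' * Real.exp (-C' * t)) with hB'
  -- derivative of B
  have hBderiv : ∀ x : ℝ, HasDerivAt B (B' x) x := by
    intro x
    have h1 : HasDerivAt (fun t : ℝ => -C' * t) (-C') x := by
      simpa using (hasDerivAt_id x).const_mul (-C')
    have h2 : HasDerivAt (fun t : ℝ => Real.exp (-C' * t))
        (Real.exp (-C' * x) * (-C')) x := h1.exp
    have h3 : HasDerivAt (fun t : ℝ => 1 - K * Real.exp (-C' * t))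
        (-(K * (Real.exp (-C' * x) * (-C')))) x := by
      simpa using ((h2.const_mul K).const_sub 1)
    have h4 := h3.exp
    convert h4 using 1
    simp only [hB']
    ring
  -- B t ≤ 1 on [0, t0]
  have hBle1 : ∀ x ∈ Icc (0:ℝ) t0, B x ≤ 1 := by
    intro x hx
    rw [hB]
    rw [Real.exp_le_one_iff]
    have h1 : Real.exp (C' * t0) * Real.exp (-C' * x) = Real.exp (C' * (t0 - x)) := by
      rw [← Real.exp_add]; ring_nf
    have h2 : (1:ℝ) ≤ Real.exp (C' * (t0 - x)) :=
      Real.one_le_exp (by nlinarith [hx.2, hC'pos])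
    have : (1:ℝ) ≤ K * Real.exp (-C' * x) := by
      rw [hK, mul_assoc, h1]
      nlinarith
    linarith
  have hBpos : ∀ x : ℝ, 0 < B x := fun x => Real.exp_pos _
  -- continuity of F on [0, t0]
  have hFcont : ContinuousOn F (Icc 0 t0) := by
    have hInt : IntegrableOn G (Icc 0 t1) volume :=
      hGcont.integrableOn_compact isCompact_Icc
    have h1 : ContinuousOn (fun t => ∫ s in (0:ℝ)..t, G s) (Icc 0 t1) := by
      have := continuousOn_primitive_interval (a := (0:ℝ)) (b := t1) (f := G)
        (by rwa [uIcc_of_le ht1pos.le])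
      rwa [uIcc_of_le ht1pos.le] at this
    exact (h1.mono (Icc_subset_Icc le_rfl ht01.le)).const_smul C
  -- right derivative of F on [0, t0)
  have hFderiv : ∀ x ∈ Ico (0:ℝ) t0, HasDerivWithinAt F (C * G x) (Ici x) x := by
    intro x hx
    have hx1 : x < t1 := lt_trans hx.2 ht01
    have hmem : Icc (0:ℝ) t1 ∈ 𝓝[Ici x] x := by
      rw [mem_nhdsWithin]
      exact ⟨Iio t1, isOpen_Iio, hx1, fun s hs => ⟨le_trans hx.1 hs.2, hs.1.le⟩⟩
    have hint : IntervalIntegrable G volume 0 x := by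
      apply ContinuousOn.intervalIntegrable
      rw [uIcc_of_le hx.1]
      exact hGcont.mono (Icc_subset_Icc le_rfl hx1.le)
    have hmem' : Icc (0:ℝ) t1 ∈ 𝓝[>] x := nhdsWithin_mono x Ioi_subset_Ici_self hmem
    have hmeas : StronglyMeasurableAtFilter G (𝓝[>] x) volume :=
      ⟨Icc 0 t1, hmem', (hGcont.aestronglyMeasurable measurableSet_Icc)⟩
    have hcw : ContinuousWithinAt G (Ioi x) x :=
      (hGcont x ⟨hx.1, hx1.le⟩).mono_of_mem_nhdsWithin hmem'
    have := (intervalIntegral.integral_hasDerivWithinAt_right (s := Ici x) (t := Ioi x) hint hmeas hcw).const_mul C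
    simpa using this
  -- initial condition
  have hB0 : F 0 ≤ B 0 := by
    simp only [hF, hB, intervalIntegral.integral_same, mul_zero]
    positivity
  -- strict differential inequality at contact points
  have hbound : ∀ x ∈ Ico (0:ℝ) t0, F x = B x → C * G x < B' x := by
    intro x hx hFB
    have hxε : x ∈ Ico (0:ℝ) ε := ⟨hx.1, lt_trans hx.2 ht0.2⟩
    have hfx0 : 0 ≤ f x := hnonneg x hxε
    have hfxF : f x ≤ F x := hineq x hxε
    have hBx1 : B x ≤ 1 := hBle1 x ⟨hx.1, hx.2.le⟩
    have hBxpos : 0 < B x := hBpos x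
    have hfx1 : f x ≤ B x := hFB ▸ hfxF
    have hlogB : Real.log (B x) = 1 - K * Real.exp (-C' * x) := Real.log_exp _
    have hGle : G x ≤ B x * (1 - Real.log (B x)) := by
      calc G x ≤ f x * (1 - Real.log (f x)) := osgoodMod_le hfx0 (hfx1.trans hBx1)
        _ ≤ B x * (1 - Real.log (B x)) := osgood_h_mono hfx0 hfx1 hBx1
    have hpos : 0 < B x * (1 - Real.log (B x)) := by
      have : 0 ≤ -Real.log (B x) := by
        simpa using neg_nonneg.mpr (Real.log_nonpos hBxpos.le hBx1)
      nlinarith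
    have hB'eq : B' x = C' * (B x * (1 - Real.log (B x))) := by
      simp only [hB', hB, hlogB, Real.log_exp]
      ring_nf
    calc C * G x ≤ C * (B x * (1 - Real.log (B x))) :=
          mul_le_mul_of_nonneg_left hGle hC
      _ < C' * (B x * (1 - Real.log (B x))) := by
          apply mul_lt_mul_of_pos_right _ hpos
          linarith
      _ = B' x := hB'eq.symm
  -- apply the fencing theorem
  have hmain := image_le_of_deriv_right_lt_deriv_boundary hFcont hFderiv hB0 hBderiv hbound
    (show t0 ∈ Icc 0 t0 from ⟨ht0.1, le_refl t0⟩)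
  -- conclude
  have hfinal : f t0 ≤ B t0 := le_trans (hineq t0 ht0) hmain
  have hBt0 : B t0 ≤ η := by
    have hKE : K * Real.exp (-C' * t0) = M := by
      rw [hK, mul_assoc, ← Real.exp_add]
      ring_nf
      simp
    have : B t0 = Real.exp (1 - M) := by simp only [hB]; rw [hKE]
    rw [this]
    have hMη : 1 - Real.log η ≤ M := le_max_right _ _
    calc Real.exp (1 - M) ≤ Real.exp (Real.log η) :=
        Real.exp_le_exp.mpr (by linarith)
      _ = η := Real.exp_log hη
  linarith
end
end

section
/- Let m ≥ 3 be an integer and let Θ : ℝ² → ℝ be continuously differentiable, m-fold rotationally symmetric (Θ(O_{2π/m} x) = Θ(x) for all x), and odd with respect to the x₁-axis (Θ(x₁, −x₂) = −Θ(x₁, x₂) for all (x₁, x₂)). Then for every R > 0, the vector-valued integrals ∫_{B(0,R)} y₁ ∇Θ(y) dy and ∫_{B(0,R)} y₂ ∇Θ(y) dy over the Euclidean ball B(0,R) ⊂ ℝ² are both equal to the zero vector. -/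
open Real MeasureTheory Metric

noncomputable section

local notation "E2" => EuclideanSpace ℝ (Fin 2)

@[simp] lemma mk2_zero (a b : ℝ) : mk2 a b 0 = a := rfl
@[simp] lemma mk2_one (a b : ℝ) : mk2 a b 1 = b := rfl

lemma ext2 {x y : E2} (h0 : x 0 = y 0) (h1 : x 1 = y 1) : x = y := by
  apply PiLp.ext; intro i; fin_cases i <;> assumption

@[simp] lemma rot_zero' (β : ℝ) (y : E2) : rot β y 0 = Real.cos β * y 0 - Real.sin β * y 1 := rfl
@[simp] lemma rot_one' (β : ℝ) (y : E2) : rot β y 1 = Real.sin β * y 0 + Real.cos β * y 1 := rfl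

lemma add_apply2 (x y : E2) (i : Fin 2) : (x + y) i = x i + y i := rfl
lemma smul_apply2 (c : ℝ) (x : E2) (i : Fin 2) : (c • x) i = c * x i := rfl
lemma neg_apply2 (x : E2) (i : Fin 2) : (-x) i = -(x i) := rfl

lemma norm2_eq (x : E2) : ‖x‖ = Real.sqrt ((x 0)^2 + (x 1)^2) := by
  rw [EuclideanSpace.norm_eq]
  simp [Fin.sum_univ_two, sq_abs]

def rotL (β : ℝ) : E2 ≃ₗᵢ[ℝ] E2 :=
{ toFun := rot β
  invFun := rot (-β)
  map_add' := by intro x y; refine ext2 ?_ ?_ <;> simp [add_apply2] <;> ring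
  map_smul' := by intro c x; refine ext2 ?_ ?_ <;> simp [smul_apply2] <;> ring
  left_inv := by
    intro x; have h := sin_sq_add_cos_sq β
    refine ext2 ?_ ?_ <;> simp [cos_neg, sin_neg]
    · linear_combination (x 0) * h
    · linear_combination (x 1) * h
  right_inv := by
    intro x; have h := sin_sq_add_cos_sq β
    refine ext2 ?_ ?_ <;> simp [cos_neg, sin_neg]
    · linear_combination (x 0) * h
    · linear_combination (x 1) * h
  norm_map' := by
    intro x
    rw [norm2_eq, norm2_eq]
    have h := sin_sq_add_cos_sq β
    congr 1
    show (Real.cos β * x 0 - Real.sin β * x 1)^2 + (Real.sin β * x 0 + Real.cos β * x 1)^2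
        = (x 0)^2 + (x 1)^2
    linear_combination ((x 0)^2 + (x 1)^2) * h }

def refL : E2 ≃ₗᵢ[ℝ] E2 :=
{ toFun := fun x => mk2 (x 0) (-(x 1))
  invFun := fun x => mk2 (x 0) (-(x 1))
  map_add' := by intro x y; refine ext2 ?_ ?_ <;> simp [add_apply2] <;> ring
  map_smul' := by intro c x; refine ext2 ?_ ?_ <;> simp [smul_apply2] <;> ring
  left_inv := by intro x; refine ext2 ?_ ?_ <;> simp
  right_inv := by intro x; refine ext2 ?_ ?_ <;> simp
  norm_map' := by
    intro x
    rw [norm2_eq, norm2_eq]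
    congr 1
    show (x 0)^2 + (-(x 1))^2 = (x 0)^2 + (x 1)^2
    ring }

@[simp] lemma rotL_apply (β : ℝ) (y : E2) : rotL β y = rot β y := by rfl
@[simp] lemma refL_apply (y : E2) : refL y = mk2 (y 0) (-(y 1)) := by rfl
@[simp] lemma rotL_symm (β : ℝ) (y : E2) : (rotL β).symm y = rot (-β) y := by rfl
@[simp] lemma refL_symm (y : E2) : refL.symm y = mk2 (y 0) (-(y 1)) := by rfl

-- change of variables under a linear isometry
lemma setIntegral_comp_li {X : Type*} [NormedAddCommGroup X] [NormedSpace ℝ X]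
    (Q : E2 ≃ₗᵢ[ℝ] E2) (f : E2 → X) (R : ℝ) :
    ∫ y in closedBall (0 : E2) R, f (Q y) = ∫ y in closedBall (0 : E2) R, f y := by
  have hmp : MeasurePreserving Q volume volume := Q.measurePreserving
  have hemb : MeasurableEmbedding Q := Q.toHomeomorph.measurableEmbedding
  have hpre : Q ⁻¹' (closedBall (0 : E2) R) = closedBall (0 : E2) R := by
    ext x
    simp [mem_closedBall, dist_zero_right, Q.norm_map]
  calc ∫ y in closedBall (0 : E2) R, f (Q y)
      = ∫ y in Q ⁻¹' (closedBall (0 : E2) R), f (Q y) := by rw [hpre]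
    _ = ∫ y in closedBall (0 : E2) R, f y := hmp.setIntegral_preimage_emb hemb f _

-- gradient and inner product
lemma inner_gradient (f : E2 → ℝ) (x v : E2) :
    (inner ℝ (gradient f x) v : ℝ) = fderiv ℝ f x v := by
  rw [gradient]
  exact InnerProductSpace.toDual_symm_apply

lemma gradient_comp_li (Q : E2 ≃ₗᵢ[ℝ] E2) (f : E2 → ℝ) (hf : Differentiable ℝ f) (x : E2) :
    gradient (fun y => f (Q y)) x = Q.symm (gradient f (Q x)) := by
  apply ext_inner_right ℝ
  intro v
  have hQd : DifferentiableAt ℝ Q x := Q.toContinuousLinearEquiv.differentiableAt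
  have hcomp : fderiv ℝ (fun y => f (Q y)) x
      = (fderiv ℝ f (Q x)).comp (fderiv ℝ Q x) := by
    exact fderiv_comp (x := x) (hf (Q x)) hQd
  have hfQ : fderiv ℝ (⇑Q) x = Q.toContinuousLinearEquiv := Q.toContinuousLinearEquiv.fderiv
  rw [inner_gradient, hcomp, hfQ]
  have : (inner ℝ (Q.symm (gradient f (Q x))) v : ℝ) = inner ℝ (gradient f (Q x)) (Q v) := by
    rw [← Q.inner_map_map (Q.symm (gradient f (Q x))) v, Q.apply_symm_apply]
  rw [this, inner_gradient]
  rfl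

lemma gradient_neg' (f : E2 → ℝ) (x : E2) :
    gradient (fun y => -f y) x = -gradient f x := by
  rw [gradient, gradient, fderiv_fun_neg, map_neg]

section grads
variable (Θ : EuclideanSpace ℝ (Fin 2) → ℝ) (hΘ : ContDiff ℝ 1 Θ)

lemma grad_continuous (hΘ : ContDiff ℝ 1 Θ) : Continuous (gradient Θ) := by
  have h1 : Continuous (fderiv ℝ Θ) := (hΘ.continuous_fderiv one_ne_zero)
  have : gradient Θ = fun x => (InnerProductSpace.toDual ℝ E2).symm (fderiv ℝ Θ x) := rfl
  rw [this]
  exact (InnerProductSpace.toDual ℝ E2).symm.continuous.comp h1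

lemma grad_rot (hΘ : ContDiff ℝ 1 Θ) (α : ℝ) (hsym : ∀ x, Θ (rot α x) = Θ x) (x : E2) :
    gradient Θ (rot α x) = rotL α (gradient Θ x) := by
  have h1 : gradient Θ x = gradient (fun y => Θ (rotL α y)) x := by
    congr 1
    funext y
    rw [rotL_apply, hsym]
  rw [h1, gradient_comp_li (rotL α) Θ (hΘ.differentiable one_ne_zero) x,
    LinearIsometryEquiv.apply_symm_apply, rotL_apply]

lemma grad_ref (hΘ : ContDiff ℝ 1 Θ)
    (hodd : ∀ x : EuclideanSpace ℝ (Fin 2), Θ (mk2 (x 0) (-(x 1))) = -Θ x) (x : E2) :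
    gradient Θ (refL x) = -(refL (gradient Θ x)) := by
  have h1 : gradient (fun y => Θ (refL y)) x = refL.symm (gradient Θ (refL x)) :=
    gradient_comp_li refL Θ (hΘ.differentiable one_ne_zero) x
  have h2 : gradient (fun y => Θ (refL y)) x = -gradient Θ x := by
    have : (fun y => Θ (refL y)) = (fun y => -Θ y) := by
      funext y; rw [refL_apply, hodd]
    rw [this, gradient_neg']
  have h3 : refL.symm (gradient Θ (refL x)) = -gradient Θ x := by rw [← h1, h2]
  have := congrArg (⇑refL) h3
  rwa [LinearIsometryEquiv.apply_symm_apply, map_neg] at this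

end grads

lemma rot_continuous (β : ℝ) : Continuous (rot β) := by
  have h := (rotL β).continuous
  exact h

lemma rot_zero (y : E2) : rot 0 y = y := by
  refine ext2 ?_ ?_ <;> simp

lemma rot_norm (β : ℝ) (y : E2) : ‖rot β y‖ = ‖y‖ := by
  have := (rotL β).norm_map y
  simpa using this

lemma mk2_eq_smul (a b : ℝ) :
    mk2 a b = a • (EuclideanSpace.single (0 : Fin 2) (1:ℝ))
      + b • (EuclideanSpace.single (1 : Fin 2) (1:ℝ)) := by
  refine ext2 ?_ ?_ <;>
    simp [add_apply2, smul_apply2, EuclideanSpace.single_apply]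

lemma hasDerivAt_rot (y : E2) (β : ℝ) :
    HasDerivAt (fun b => rot b y) (rot (β + π/2) y) β := by
  have h0 : HasDerivAt (fun b : ℝ => Real.cos b * y 0 - Real.sin b * y 1)
      (-Real.sin β * y 0 - Real.cos β * y 1) β :=
    ((Real.hasDerivAt_cos β).mul_const (y 0)).sub ((Real.hasDerivAt_sin β).mul_const (y 1))
  have h1 : HasDerivAt (fun b : ℝ => Real.sin b * y 0 + Real.cos b * y 1)
      (Real.cos β * y 0 + -Real.sin β * y 1) β :=
    ((Real.hasDerivAt_sin β).mul_const (y 0)).add ((Real.hasDerivAt_cos β).mul_const (y 1))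
  have h := (h0.smul_const (EuclideanSpace.single (0 : Fin 2) (1:ℝ))).add
    (h1.smul_const (EuclideanSpace.single (1 : Fin 2) (1:ℝ)))
  have e1 : (fun b => (Real.cos b * y 0 - Real.sin b * y 1)
        • (EuclideanSpace.single (0 : Fin 2) (1:ℝ))
      + (Real.sin b * y 0 + Real.cos b * y 1) • (EuclideanSpace.single (1 : Fin 2) (1:ℝ)))
      = fun b => rot b y := by
    funext b; rw [rot, mk2_eq_smul]
  have e2 : (-Real.sin β * y 0 - Real.cos β * y 1)
        • (EuclideanSpace.single (0 : Fin 2) (1:ℝ))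
      + (Real.cos β * y 0 + -Real.sin β * y 1) • (EuclideanSpace.single (1 : Fin 2) (1:ℝ))
      = rot (β + π/2) y := by
    rw [rot, mk2_eq_smul, Real.cos_add_pi_div_two, Real.sin_add_pi_div_two]
  rw [← e1, ← e2]; exact h

lemma setIntegral_comp_rot {X : Type*} [NormedAddCommGroup X] [NormedSpace ℝ X]
    (β : ℝ) (f : E2 → X) (R : ℝ) :
    ∫ y in closedBall (0 : E2) R, f (rot β y) = ∫ y in closedBall (0 : E2) R, f y := by
  have h := setIntegral_comp_li (rotL β) f R
  simpa using h

lemma setIntegral_comp_ref {X : Type*} [NormedAddCommGroup X] [NormedSpace ℝ X]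
    (f : E2 → X) (R : ℝ) :
    ∫ y in closedBall (0 : E2) R, f (mk2 (y 0) (-(y 1))) = ∫ y in closedBall (0 : E2) R, f y := by
  have h := setIntegral_comp_li refL f R
  simpa using h

lemma integral_inner_rot_perp (Θ : EuclideanSpace ℝ (Fin 2) → ℝ) (hΘ : ContDiff ℝ 1 Θ)
    (R : ℝ) (hR : 0 < R) :
    ∫ y in closedBall (0 : E2) R, (inner ℝ (gradient Θ y) (rot (π/2) y) : ℝ) = 0 := by
  set μ := volume.restrict (closedBall (0 : E2) R) with hμ
  obtain ⟨C, hC⟩ := (isCompact_closedBall (0 : E2) R).exists_bound_of_continuousOn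
    (grad_continuous Θ hΘ).continuousOn
  have hdiff := hΘ.differentiable one_ne_zero
  -- derivative of β ↦ Θ (rot β y)
  have key : ∀ (β : ℝ) (y : E2), HasDerivAt (fun b => Θ (rot b y))
      ((inner ℝ (gradient Θ (rot β y)) (rot (β + π/2) y) : ℝ)) β := by
    intro β y
    have h := (hdiff (rot β y)).hasFDerivAt.comp_hasDerivAt β (hasDerivAt_rot y β)
    rwa [inner_gradient]
  have hFmeas : ∀ᶠ β in nhds (0:ℝ), AEStronglyMeasurable (fun y => Θ (rot β y)) μ := by
    refine Filter.Eventually.of_forall fun β => ?_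
    exact (hΘ.continuous.comp (rot_continuous β)).aestronglyMeasurable
  have hFint : Integrable (fun y => Θ (rot 0 y)) μ := by
    refine ((hΘ.continuous.comp (rot_continuous 0)).continuousOn.integrableOn_compact
      (isCompact_closedBall _ _))
  have hF'meas : AEStronglyMeasurable
      (fun y => (inner ℝ (gradient Θ (rot 0 y)) (rot (0 + π/2) y) : ℝ)) μ := by
    refine Continuous.aestronglyMeasurable ?_
    exact ((grad_continuous Θ hΘ).comp (rot_continuous 0)).inner (rot_continuous (0 + π/2))
  have hbound : ∀ᵐ y ∂μ, ∀ β ∈ ball (0:ℝ) 1,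
      ‖(inner ℝ (gradient Θ (rot β y)) (rot (β + π/2) y) : ℝ)‖ ≤ C * R := by
    rw [hμ]
    filter_upwards [ae_restrict_mem measurableSet_closedBall] with y hy β _
    have h1 : ‖gradient Θ (rot β y)‖ ≤ C := by
      apply hC
      simp only [mem_closedBall, dist_zero_right] at hy ⊢
      rw [rot_norm]; exact hy
    have h2 : ‖rot (β + π/2) y‖ ≤ R := by
      rw [rot_norm]
      simpa [mem_closedBall, dist_zero_right] using hy
    calc ‖(inner ℝ (gradient Θ (rot β y)) (rot (β + π/2) y) : ℝ)‖
        ≤ ‖gradient Θ (rot β y)‖ * ‖rot (β + π/2) y‖ := norm_inner_le_norm _ _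
      _ ≤ C * R := by
          have h0 : (0:ℝ) ≤ ‖gradient Θ (rot β y)‖ := norm_nonneg _
          exact mul_le_mul h1 h2 (norm_nonneg _) (le_trans h0 h1)
  have hboundint : Integrable (fun _ : E2 => C * R) μ := by
    rw [hμ]
    exact integrableOn_const (measure_closedBall_lt_top).ne
  have hdiff' : ∀ᵐ y ∂μ, ∀ β ∈ ball (0:ℝ) 1, HasDerivAt (fun b => Θ (rot b y))
      ((inner ℝ (gradient Θ (rot β y)) (rot (β + π/2) y) : ℝ)) β :=
    Filter.Eventually.of_forall fun y β _ => key β y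
  have main := (hasDerivAt_integral_of_dominated_loc_of_deriv_le (μ := μ)
    (F := fun β y => Θ (rot β y))
    (F' := fun β y => (inner ℝ (gradient Θ (rot β y)) (rot (β + π/2) y) : ℝ))
    (x₀ := (0:ℝ)) (bound := fun _ => C * R)
    (ball_mem_nhds 0 one_pos) hFmeas hFint hF'meas hbound hboundint hdiff').2
  have hconst : (fun β => ∫ y, Θ (rot β y) ∂μ) = fun _ => ∫ y, Θ y ∂μ := by
    funext β
    exact setIntegral_comp_rot β Θ R
  rw [hconst] at main
  have := main.unique (hasDerivAt_const 0 _)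
  rw [← this]
  congr 1
  funext y
  rw [rot_zero, zero_add]

lemma zero_apply2 (i : Fin 2) : (0 : E2) i = 0 := rfl
lemma sub_apply2 (x y : E2) (i : Fin 2) : (x - y) i = x i - y i := rfl

/-- Orthogonality of `∇Θ` to the first circular Fourier modes on every ball, for `Θ`
`m`-fold rotationally symmetric (`m ≥ 3`) and odd with respect to the `x₁`-axis:
`∫_{B(0,R)} y₁ ∇Θ(y) dy = 0 = ∫_{B(0,R)} y₂ ∇Θ(y) dy`. -/
theorem gradient_first_modes_vanish (m : ℕ) (hm : 3 ≤ m)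
    (Θ : EuclideanSpace ℝ (Fin 2) → ℝ) (hΘ : ContDiff ℝ 1 Θ)
    (hsym : ∀ x, Θ (rot (2 * Real.pi / m) x) = Θ x)
    (hodd : ∀ x : EuclideanSpace ℝ (Fin 2), Θ (mk2 (x 0) (-(x 1))) = -Θ x) :
    ∀ R : ℝ, 0 < R →
      (∫ y in closedBall (0 : EuclideanSpace ℝ (Fin 2)) R, (y 0) • gradient Θ y) = 0 ∧
      (∫ y in closedBall (0 : EuclideanSpace ℝ (Fin 2)) R, (y 1) • gradient Θ y) = 0 := by
  intro R hR
  set α := 2 * Real.pi / m with hα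
  have hgc : Continuous (gradient Θ) := grad_continuous Θ hΘ
  have hcont0 : Continuous (fun y : E2 => y 0) := PiLp.continuous_apply 2 _ 0
  have hcont1 : Continuous (fun y : E2 => y 1) := PiLp.continuous_apply 2 _ 1
  have hint : ∀ w : E2 → ℝ, Continuous w →
      IntegrableOn (fun y => w y • gradient Θ y) (closedBall (0:E2) R) volume := fun w hw =>
    ((hw.smul hgc).continuousOn.integrableOn_compact (isCompact_closedBall _ _))
  have hints : ∀ (w : E2 → ℝ), Continuous w → ∀ i : Fin 2,
      IntegrableOn (fun y => w y * gradient Θ y i) (closedBall (0:E2) R) volume := fun w hw i =>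
    (((hw.mul ((PiLp.continuous_apply 2 _ i).comp hgc)).continuousOn.integrableOn_compact
      (isCompact_closedBall _ _)))
  set I1 := ∫ y in closedBall (0:E2) R, (y 0) • gradient Θ y with hI1
  set I2 := ∫ y in closedBall (0:E2) R, (y 1) • gradient Θ y with hI2
  -- components of the integrals
  have comp : ∀ (w : E2 → ℝ), Continuous w → ∀ i : Fin 2,
      (∫ y in closedBall (0:E2) R, w y • gradient Θ y) i
        = ∫ y in closedBall (0:E2) R, w y * gradient Θ y i := by
    intro w hw i
    have h := (EuclideanSpace.proj i : E2 →L[ℝ] ℝ).integral_comp_comm (hint w hw)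
    simpa [smul_eq_mul] using h.symm
  -- odd symmetry : first component of I1 and second of I2 vanish
  have hgref : ∀ y : E2, gradient Θ (mk2 (y 0) (-(y 1))) = -(refL (gradient Θ y)) := by
    intro y
    have h := grad_ref Θ hΘ hodd y
    simpa using h
  set L : E2 →L[ℝ] E2 := (refL.toContinuousLinearEquiv : E2 →L[ℝ] E2) with hLdef
  have hLapp : ∀ v : E2, L v = refL v := fun v => rfl
  have hrefI1 : I1 = - refL I1 := by
    have h1 : I1 = ∫ y in closedBall (0:E2) R,
        ((mk2 (y 0) (-(y 1))) 0) • gradient Θ (mk2 (y 0) (-(y 1))) :=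
      (setIntegral_comp_ref (fun z => (z 0) • gradient Θ z) R).symm
    have h2 : (fun y : E2 => ((mk2 (y 0) (-(y 1))) 0) • gradient Θ (mk2 (y 0) (-(y 1))))
        = fun y : E2 => -(L ((y 0) • gradient Θ y)) := by
      funext y
      rw [mk2_zero, hgref y, smul_neg, hLapp, _root_.map_smul]
    conv_lhs => rw [h1, h2]
    rw [integral_neg, L.integral_comp_comm (hint _ hcont0), ← hI1, hLapp]
  have hrefI2 : I2 = refL I2 := by
    have h1 : I2 = ∫ y in closedBall (0:E2) R,
        ((mk2 (y 0) (-(y 1))) 1) • gradient Θ (mk2 (y 0) (-(y 1))) :=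
      (setIntegral_comp_ref (fun z => (z 1) • gradient Θ z) R).symm
    have h2 : (fun y : E2 => ((mk2 (y 0) (-(y 1))) 1) • gradient Θ (mk2 (y 0) (-(y 1))))
        = fun y : E2 => L ((y 1) • gradient Θ y) := by
      funext y
      rw [mk2_one, hgref y, hLapp, _root_.map_smul, smul_neg, neg_smul, neg_neg]
    conv_lhs => rw [h1, h2]
    rw [L.integral_comp_comm (hint _ hcont1), ← hI2, hLapp]
  have hp : I1 0 = 0 := by
    have h := congrArg (fun v : E2 => v 0) hrefI1
    simp only [neg_apply2, refL_apply, mk2_zero] at h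
    linarith
  have hu : I2 1 = 0 := by
    have h := congrArg (fun v : E2 => v 1) hrefI2
    simp only [refL_apply, mk2_one] at h
    linarith
  -- rotation symmetry : I1 1 = - I2 0
  have hgrot : ∀ y : E2, gradient Θ (rot α y) = rotL α (gradient Θ y) :=
    grad_rot Θ hΘ α hsym
  set M : E2 →L[ℝ] E2 := ((rotL α).toContinuousLinearEquiv : E2 →L[ℝ] E2) with hMdef
  have hMapp : ∀ v : E2, M v = rotL α v := fun v => rfl
  have hintg : Integrable (fun y : E2 => (Real.cos α * y 0 - Real.sin α * y 1) • gradient Θ y)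
      (volume.restrict (closedBall (0:E2) R)) :=
    hint _ (((continuous_const.mul hcont0).sub (continuous_const.mul hcont1)))
  have hrotI1 : I1 = M (Real.cos α • I1 - Real.sin α • I2) := by
    have h1 : I1 = ∫ y in closedBall (0:E2) R, ((rot α y) 0) • gradient Θ (rot α y) :=
      (setIntegral_comp_rot α (fun z => (z 0) • gradient Θ z) R).symm
    have h2 : (fun y : E2 => ((rot α y) 0) • gradient Θ (rot α y))
        = fun y : E2 => M ((Real.cos α * y 0 - Real.sin α * y 1) • gradient Θ y) := by
      funext y
      rw [rot_zero', hgrot y, hMapp, _root_.map_smul]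
    have h3 : (fun y : E2 => (Real.cos α * y 0 - Real.sin α * y 1) • gradient Θ y)
        = fun y : E2 => Real.cos α • ((y 0) • gradient Θ y)
            - Real.sin α • ((y 1) • gradient Θ y) := by
      funext y
      rw [smul_smul, smul_smul, ← sub_smul]
    have h4 : ∫ y in closedBall (0:E2) R, (Real.cos α * y 0 - Real.sin α * y 1) • gradient Θ y
        = Real.cos α • I1 - Real.sin α • I2 := by
      rw [h3]
      rw [integral_sub]
      · rw [integral_smul, integral_smul, ← hI1, ← hI2]
      · exact (hint _ hcont0).smul (Real.cos α)
      · exact (hint _ hcont1).smul (Real.sin α)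
    conv_lhs => rw [h1, h2]
    rw [M.integral_comp_comm hintg, h4]
  have hq : I1 1 = Real.sin α * (Real.cos α * I1 0 - Real.sin α * I2 0)
      + Real.cos α * (Real.cos α * I1 1 - Real.sin α * I2 1) := by
    have h := congrArg (fun v : E2 => v 1) hrotI1
    simpa only [hMapp, rotL_apply, rot_one', sub_apply2, smul_apply2, smul_eq_mul] using h
  have hs : Real.sin α ≠ 0 := by
    have hm0 : (0:ℝ) < m := by positivity
    have h0 : 0 < α := by
      rw [hα]
      positivity
    have hlt : α < π := by
      rw [hα]
      rw [div_lt_iff₀ hm0]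
      have h3 : (3:ℝ) ≤ m := by exact_mod_cast hm
      nlinarith [Real.pi_pos]
    exact ne_of_gt (Real.sin_pos_of_pos_of_lt_pi h0 hlt)
  have hqr : I1 1 = - I2 0 := by
    have h2 := sin_sq_add_cos_sq α
    rw [hp, hu] at hq
    have key : Real.sin α ^ 2 * (I1 1 + I2 0) = 0 := by
      linear_combination hq + I1 1 * h2
    rcases mul_eq_zero.mp key with h | h
    · exact absurd (pow_eq_zero_iff two_ne_zero |>.mp h) hs
    · linarith
  -- the rotation-generator identity : I1 1 = I2 0
  have hCkey := integral_inner_rot_perp Θ hΘ R hR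
  have hCfun : (fun y : E2 => (inner ℝ (gradient Θ y) (rot (π/2) y) : ℝ))
      = fun y : E2 => y 0 * gradient Θ y 1 - y 1 * gradient Θ y 0 := by
    funext y
    simp only [PiLp.inner_apply, RCLike.inner_apply, starRingEnd_apply, star_trivial,
      Fin.sum_univ_two, rot_zero', rot_one', Real.cos_pi_div_two, Real.sin_pi_div_two]
    ring
  rw [hCfun] at hCkey
  rw [integral_sub (hints _ hcont0 1) (hints _ hcont1 0)] at hCkey
  have e1 : ∫ y in closedBall (0:E2) R, y 0 * gradient Θ y 1 = I1 1 := (comp _ hcont0 1).symm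
  have e2 : ∫ y in closedBall (0:E2) R, y 1 * gradient Θ y 0 = I2 0 := (comp _ hcont1 0).symm
  rw [e1, e2] at hCkey
  have hq0 : I1 1 = 0 := by linarith
  have hr0 : I2 0 = 0 := by linarith
  constructor
  · refine ext2 ?_ ?_
    · rw [hp, zero_apply2]
    · rw [hq0, zero_apply2]
  · refine ext2 ?_ ?_
    · rw [hr0, zero_apply2]
    · rw [hu, zero_apply2]
end
end
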